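/- arXiv:1503.08257 — 3 statements merged into one kernel-verified Lean document; each statement's English description precedes it below -/
import Mathlib

section
/- Let (φ, 0, ψ), (α₀, 0, η), (φ, χ, ψ*), and (α₀, β, η*) be four points on the unit sphere S² with χ, ψ*, β, η*, ψ, η all nonnegative. Then the distance between the two points in the xz-plane is at most the distance between the corresponding points with the same first coordinates: |(φ,0,ψ) - (α₀,0,η)| ≤ |(φ,χ,ψ*) - (α₀,β,η*)|. -/
theorem stmt_6 (φ ψ α₀ η χ ψs β ηs : ℝ)
    (h1 : φ ^ 2 + ψ ^ 2 = 1) (h2 : α₀ ^ 2 + η ^ 2 = 1)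
    (h3 : φ ^ 2 + χ ^ 2 + ψs ^ 2 = 1) (h4 : α₀ ^ 2 + β ^ 2 + ηs ^ 2 = 1)
    (hχ : 0 ≤ χ) (hψs : 0 ≤ ψs) (hβ : 0 ≤ β) (hηs : 0 ≤ ηs)
    (hψ : 0 ≤ ψ) (hη : 0 ≤ η) :
    Real.sqrt ((φ - α₀) ^ 2 + (0 - 0) ^ 2 + (ψ - η) ^ 2) ≤
      Real.sqrt ((φ - α₀) ^ 2 + (χ - β) ^ 2 + (ψs - ηs) ^ 2) := by
  apply Real.sqrt_le_sqrt
  have key : χ * β + ψs * ηs ≤ ψ * η := by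
    have hs : (χ * β + ψs * ηs) ^ 2 ≤ (ψ * η) ^ 2 := by nlinarith [sq_nonneg (χ * ηs - ψs * β)]
    nlinarith [mul_nonneg hψ hη, add_nonneg (mul_nonneg hχ hβ) (mul_nonneg hψs hηs)]
  nlinarith [key]
end

section
/- Let σ > 0, D₂ > 0, and define f(x) = 8D₂ x⁸ + 4(1+σ)x⁴ − 4σx², with a₀ = −f(√R) where R = R(σ,D₂) ∈ (0,1/2) is the unique real root of u³ + ((σ+1)/(4D₂))u − σ/(8D₂) = 0. Then W(θ) := f(sin(θ/2)) + a₀ is an even function of θ, W(θ) ≥ 0 for all θ ∈ [−π, π], and W(θ) = 0 for θ ∈ [−π,π] if and only if θ = ±β where β = 2 arcsin(√R). -/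
open Real

theorem stmt_13 (σ D₂ R : ℝ) (hσ : 0 < σ) (hD : 0 < D₂)
    (hRroot : R ^ 3 + ((σ + 1) / (4 * D₂)) * R - σ / (8 * D₂) = 0)
    (hR0 : 0 < R) (hR1 : R < 1 / 2)
    (f : ℝ → ℝ)
    (hf : f = fun x => 8 * D₂ * x ^ 8 + 4 * (1 + σ) * x ^ 4 - 4 * σ * x ^ 2)
    (a₀ : ℝ) (ha₀ : a₀ = -f (Real.sqrt R))
    (W : ℝ → ℝ) (hW : W = fun θ => f (Real.sin (θ / 2)) + a₀)
    (β : ℝ) (hβ : β = 2 * Real.arcsin (Real.sqrt R)) :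
    (∀ θ : ℝ, W (-θ) = W θ) ∧
      (∀ θ ∈ Set.Icc (-π) π, 0 ≤ W θ) ∧
      (∀ θ ∈ Set.Icc (-π) π, W θ = 0 ↔ θ = β ∨ θ = -β) := by
  have hR' : 32 * D₂ * R ^ 3 + 8 * (σ + 1) * R - 4 * σ = 0 := by
    field_simp at hRroot
    nlinarith [hRroot, hD.le]
  set s : ℝ := Real.sqrt R with hs
  have hsq : s ^ 2 = R := Real.sq_sqrt hR0.le
  have hs0 : 0 ≤ s := Real.sqrt_nonneg R
  have hs1 : s ≤ 1 := Real.sqrt_le_one.mpr (by linarith)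
  have key : ∀ x : ℝ, f x + a₀ =
      (x ^ 2 - R) ^ 2 * (8 * D₂ * ((x ^ 2 + R) ^ 2 + 2 * R ^ 2) + 4 * (1 + σ)) := by
    intro x
    subst hf ha₀
    simp only
    linear_combination (x ^ 2 - R) * hR' -
      (8 * D₂ * (s ^ 6 + s ^ 4 * R + s ^ 2 * R ^ 2 + R ^ 3) + 4 * (1 + σ) * (s ^ 2 + R)
        - 4 * σ) * hsq
  have hWkey : ∀ θ : ℝ, W θ = ((Real.sin (θ / 2)) ^ 2 - R) ^ 2 *
      (8 * D₂ * (((Real.sin (θ / 2)) ^ 2 + R) ^ 2 + 2 * R ^ 2) + 4 * (1 + σ)) := by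
    intro θ; rw [hW]; exact key _
  have hsinβ : Real.sin (β / 2) = s := by
    rw [hβ]
    rw [show (2 : ℝ) * Real.arcsin s / 2 = Real.arcsin s by ring]
    exact Real.sin_arcsin (by linarith) hs1
  have hβpos : 0 ≤ β := by
    rw [hβ]
    have := Real.arcsin_nonneg.mpr hs0
    linarith
  have hβlt : β < π := by
    rw [hβ]
    have := Real.arcsin_lt_pi_div_two.mpr (((Real.sqrt_lt' one_pos).mpr (by norm_num; linarith) : s < 1))
    linarith
  refine ⟨?_, ?_, ?_⟩
  · intro θ
    rw [hW]
    simp only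
    rw [neg_div, Real.sin_neg, hf]
    simp only
    ring
  · intro θ _
    rw [hWkey]
    positivity
  · intro θ hθ
    obtain ⟨h1, h2⟩ := hθ
    have hpi : 0 < π := Real.pi_pos
    have hl : -(π / 2) ≤ θ / 2 := by linarith
    have hr : θ / 2 ≤ π / 2 := by linarith
    constructor
    · intro h0
      rw [hWkey] at h0
      have hQ : 0 < 8 * D₂ * (((Real.sin (θ / 2)) ^ 2 + R) ^ 2 + 2 * R ^ 2) + 4 * (1 + σ) := by
        positivity
      have h3 : (Real.sin (θ / 2)) ^ 2 = R := by
        rcases mul_eq_zero.mp h0 with h | h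
        · have := pow_eq_zero_iff (n := 2) (by norm_num) |>.mp h
          linarith
        · exact absurd h hQ.ne'
      have habs : |Real.sin (θ / 2)| = s := by
        rw [← Real.sqrt_sq_eq_abs, h3]
      rcases (abs_eq hs0).mp habs with h | h
      · left
        have harc := Real.arcsin_sin hl hr
        rw [h] at harc
        rw [hβ]; linarith [harc]
      · right
        have harc := Real.arcsin_sin hl hr
        rw [h, Real.arcsin_neg] at harc
        rw [hβ]
        have : -Real.arcsin s = θ / 2 := harc
        linarith
    · intro h
      rcases h with rfl | rfl
      · rw [hWkey, hsinβ, hsq]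
        ring
      · rw [hWkey, neg_div, Real.sin_neg, hsinβ, neg_sq, hsq]
        ring
end

section
/- Let σ > 0 and D₂ > 0, and define on S² the potential W(n) = (D₂/2)(1−n₃)⁴ + (1−n₃)² + σ(n₂² + n₃²) + b₀. Let B = 1 − 2√((1+σ)/(3D₂)) · sinh((1/3) arsinh((3σ/(2(1+σ))) √(3D₂/(1+σ)))). Then the function h(z) = (D₂/2)(1−z)⁴ + (1−z)² + σ z² restricted to [−1,1] attains its minimum exactly at z = B, and B → 1/(1+σ) as D₂ → 0⁺. -/
open Filter

noncomputable def hCL (σ D₂ z : ℝ) : ℝ :=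
  (D₂ / 2) * (1 - z) ^ 4 + (1 - z) ^ 2 + σ * z ^ 2

noncomputable def Bmin (σ D₂ : ℝ) : ℝ :=
  1 - 2 * Real.sqrt ((1 + σ) / (3 * D₂)) *
    Real.sinh ((1 / 3) * Real.arsinh ((3 * σ / (2 * (1 + σ))) *
      Real.sqrt (3 * D₂ / (1 + σ))))

/-- The key cubic identity satisfied by `t = 1 - Bmin σ D₂`. -/
lemma Bmin_cubic (σ D₂ : ℝ) (hσ : 0 < σ) (hD : 0 < D₂) :
    D₂ * (1 - Bmin σ D₂) ^ 3 + (1 + σ) * (1 - Bmin σ D₂) = σ := by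
  have h1σ : (0:ℝ) < 1 + σ := by linarith
  set y : ℝ := (3 * σ / (2 * (1 + σ))) * Real.sqrt (3 * D₂ / (1 + σ)) with hy
  set s : ℝ := Real.sinh ((1 / 3) * Real.arsinh y) with hs
  set a : ℝ := Real.sqrt ((1 + σ) / (3 * D₂)) with ha
  have ht : 1 - Bmin σ D₂ = 2 * a * s := by
    simp only [Bmin, ha, hs, hy]; ring
  have h1ne : (1 + σ) ≠ 0 := by positivity
  have hDne : D₂ ≠ 0 := hD.ne'
  have ha2 : a ^ 2 = (1 + σ) / (3 * D₂) := by
    rw [ha]; exact Real.sq_sqrt (by positivity)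
  have hys : 4 * s ^ 3 + 3 * s = y := by
    have h3 := Real.sinh_three_mul ((1 / 3) * Real.arsinh y)
    rw [show (3:ℝ) * ((1/3) * Real.arsinh y) = Real.arsinh y by ring,
      Real.sinh_arsinh] at h3
    rw [hs]; linarith
  have hprod : a * Real.sqrt (3 * D₂ / (1 + σ)) = 1 := by
    rw [ha, ← Real.sqrt_mul (by positivity)]
    rw [show (1 + σ) / (3 * D₂) * (3 * D₂ / (1 + σ)) = 1 by field_simp]
    exact Real.sqrt_one
  have hay : a * y = 3 * σ / (2 * (1 + σ)) := by
    rw [hy, show a * (3 * σ / (2 * (1 + σ)) * Real.sqrt (3 * D₂ / (1 + σ)))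
      = 3 * σ / (2 * (1 + σ)) * (a * Real.sqrt (3 * D₂ / (1 + σ))) from by ring,
      hprod, mul_one]
  rw [ht]
  linear_combination (norm := (field_simp; ring)) (8 * D₂ * a * s ^ 3) * ha2
    + (2 * (1 + σ) * a / 3) * hys + (2 * (1 + σ) / 3) * hay

lemma Bmin_t_pos (σ D₂ : ℝ) (hσ : 0 < σ) (hD : 0 < D₂) :
    0 < 1 - Bmin σ D₂ := by
  have key := Bmin_cubic σ D₂ hσ hD
  set t := 1 - Bmin σ D₂
  by_contra h
  push_neg at h
  nlinarith [mul_nonneg (mul_nonneg hD.le (neg_nonneg.2 h)) (sq_nonneg t)]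

lemma Bmin_t_lt (σ D₂ : ℝ) (hσ : 0 < σ) (hD : 0 < D₂) :
    (1 + σ) * (1 - Bmin σ D₂) < σ := by
  have key := Bmin_cubic σ D₂ hσ hD
  have ht := Bmin_t_pos σ D₂ hσ hD
  nlinarith [pow_pos ht 3]

theorem stmt_18 (σ : ℝ) (hσ : 0 < σ) :
    (∀ D₂ : ℝ, 0 < D₂ →
      Bmin σ D₂ ∈ Set.Icc (-1 : ℝ) 1 ∧
        ∀ z ∈ Set.Icc (-1 : ℝ) 1,
          hCL σ D₂ (Bmin σ D₂) ≤ hCL σ D₂ z ∧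
            (hCL σ D₂ z = hCL σ D₂ (Bmin σ D₂) → z = Bmin σ D₂)) ∧
      Tendsto (fun D₂ => Bmin σ D₂) (nhdsWithin 0 (Set.Ioi 0))
        (nhds (1 / (1 + σ))) := by
  have h1σ : (0:ℝ) < 1 + σ := by linarith
  constructor
  · intro D₂ hD
    have key := Bmin_cubic σ D₂ hσ hD
    have htpos := Bmin_t_pos σ D₂ hσ hD
    have htlt := Bmin_t_lt σ D₂ hσ hD
    set c := Bmin σ D₂ with hc
    have hcmem : c ∈ Set.Icc (-1:ℝ) 1 := by
      constructor
      · nlinarith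
      · linarith
    refine ⟨hcmem, fun z _ => ?_⟩
    have factor : hCL σ D₂ z - hCL σ D₂ c
        = (z - c) ^ 2 * ((1 + σ) + (D₂ / 2) * (((1 - z) + (1 - c)) ^ 2 + 2 * (1 - c) ^ 2)) := by
      simp only [hCL]
      linear_combination 2 * (c - z) * key
    have hQ : 0 < (1 + σ) + (D₂ / 2) * (((1 - z) + (1 - c)) ^ 2 + 2 * (1 - c) ^ 2) := by
      positivity
    constructor
    · nlinarith [sq_nonneg (z - c)]
    · intro hEq
      have hzero : (z - c) ^ 2 * ((1 + σ) + (D₂ / 2) * (((1 - z) + (1 - c)) ^ 2 + 2 * (1 - c) ^ 2)) = 0 := by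
        linarith [factor]
      have hz : (z - c) ^ 2 = 0 := by
        rcases mul_eq_zero.1 hzero with h | h
        · exact h
        · exact absurd h hQ.ne'
      have := pow_eq_zero_iff (n := 2) (by norm_num) |>.1 hz
      linarith [sub_eq_zero.1 this]
  · rw [Metric.tendsto_nhdsWithin_nhds]
    intro ε hε
    refine ⟨ε * (1 + σ), by positivity, fun D₂ hD hdist => ?_⟩
    have hD' : (0:ℝ) < D₂ := hD
    have key := Bmin_cubic σ D₂ hσ hD'
    have htpos := Bmin_t_pos σ D₂ hσ hD'
    have htlt := Bmin_t_lt σ D₂ hσ hD'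
    set t := 1 - Bmin σ D₂ with ht
    have ht1 : t < 1 := by nlinarith
    rw [Real.dist_eq] at hdist ⊢
    rw [sub_zero, abs_of_pos hD'] at hdist
    have hBe : Bmin σ D₂ - 1 / (1 + σ) = D₂ * t ^ 3 / (1 + σ) := by
      field_simp
      nlinarith [key]
    rw [hBe, abs_of_nonneg (by positivity)]
    rw [div_lt_iff₀ h1σ]
    nlinarith [pow_pos htpos 3, pow_lt_one₀ htpos.le ht1 (by norm_num : 3 ≠ 0)]
end
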